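/- Let F be a countably union-closed family of sets. If (F, ⊆) satisfies the descending chain condition, then the family N(F) = {F_x : x ∈ U_F}, ordered by inclusion, satisfies the ascending chain condition. -/
import Mathlib


/-- If `F` is countably union-closed and `(F, ⊆)` satisfies DCC, then
`N(F) = {F_x : x ∈ U_F}` ordered by inclusion satisfies ACC. -/
theorem stmt_2 {α : Type*} (F : Set (Set α))
    (hCUC : ∀ f : ℕ → Set α, (∀ n, f n ∈ F) → (⋃ n, f n) ∈ F)
    (hDCC : ∀ S ⊆ F, S.Nonempty → ∃ M ∈ S, ∀ B ∈ S, B ⊆ M → B = M) :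
    ∀ 𝒮 ⊆ {N : Set (Set α) | ∃ x ∈ ⋃₀ F, N = {A ∈ F | x ∈ A}},
      𝒮.Nonempty → ∃ M ∈ 𝒮, ∀ N ∈ 𝒮, M ⊆ N → N = M := by
  intro 𝒮 h𝒮 hne
  by_contra hmax
  push_neg at hmax
  obtain ⟨N0, hN0⟩ := hne
  -- build a strictly increasing sequence in 𝒮
  have step : ∀ N : {N // N ∈ 𝒮}, ∃ N' : {N // N ∈ 𝒮}, N.1 ⊆ N'.1 ∧ N'.1 ≠ N.1 := by
    rintro ⟨N, hN⟩
    obtain ⟨N', hN', hsub, hne'⟩ := hmax N hN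
    exact ⟨⟨N', hN'⟩, hsub, hne'⟩
  choose f hf1 hf2 using step
  set seq : ℕ → {N // N ∈ 𝒮} := fun n => f^[n] ⟨N0, hN0⟩ with hseq
  have hsucc : ∀ n, seq (n + 1) = f (seq n) := by
    intro n
    simp [hseq, Function.iterate_succ_apply']
  have mono : ∀ m n, m ≤ n → (seq m).1 ⊆ (seq n).1 := by
    intro m n hmn
    induction n with
    | zero =>
      have : m = 0 := Nat.le_zero.mp hmn
      subst this; exact subset_rfl
    | succ k ih =>
      rcases Nat.lt_or_ge m (k + 1) with h | h
      · exact (ih (Nat.lt_succ_iff.mp h)).trans (by rw [hsucc]; exact hf1 _)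
      · have : m = k + 1 := le_antisymm hmn h
        subst this; exact subset_rfl
  -- pick representing points x n
  have hrep : ∀ n, ∃ x, (seq n).1 = {A ∈ F | x ∈ A} := by
    intro n
    obtain ⟨x, _, hx⟩ := h𝒮 (seq n).2
    exact ⟨x, hx⟩
  choose x hx using hrep
  -- pick separating sets A n ∈ seq (n+1) \ seq n
  have hsep : ∀ n, ∃ A, A ∈ (seq (n + 1)).1 ∧ A ∉ (seq n).1 := by
    intro n
    have hss : (seq n).1 ⊂ (seq (n + 1)).1 := by
      rw [hsucc]
      exact (hf1 (seq n)).ssubset_of_ne (hf2 (seq n)).symm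
    exact Set.exists_of_ssubset hss
  choose A hA1 hA2 using hsep
  have hAF : ∀ n, A n ∈ F := fun n => ((hx (n + 1)) ▸ hA1 n).1
  have hxA : ∀ n, x (n + 1) ∈ A n := fun n => ((hx (n + 1)) ▸ hA1 n).2
  have hxA' : ∀ n, x n ∉ A n := by
    intro n hmem
    exact hA2 n ((hx n) ▸ ⟨hAF n, hmem⟩)
  -- the descending chain of tails
  set B : ℕ → Set α := fun n => ⋃ k, A (n + k) with hB
  have hBF : ∀ n, B n ∈ F := fun n => hCUC _ (fun k => hAF (n + k))
  have hBsub : ∀ n, B (n + 1) ⊆ B n := by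
    intro n y hy
    simp only [hB, Set.mem_iUnion] at hy ⊢
    obtain ⟨k, hk⟩ := hy
    exact ⟨k + 1, by rwa [Nat.add_comm k 1, ← Nat.add_assoc]⟩
  have hxB : ∀ n, x (n + 1) ∈ B n := by
    intro n
    simp only [hB, Set.mem_iUnion]
    exact ⟨0, by simpa using hxA n⟩
  have hxnB : ∀ n, x (n + 1) ∉ B (n + 1) := by
    intro n hmem
    simp only [hB, Set.mem_iUnion] at hmem
    obtain ⟨k, hk⟩ := hmem
    -- A (n+1+k) ∈ seq (n+1), hence ∈ seq (n+1+k), hence x (n+1+k) ∈ A (n+1+k)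
    have h1 : A (n + 1 + k) ∈ (seq (n + 1)).1 := by
      rw [hx (n + 1)]
      exact ⟨hAF _, hk⟩
    have h2 : A (n + 1 + k) ∈ (seq (n + 1 + k)).1 :=
      mono (n + 1) (n + 1 + k) (Nat.le_add_right _ _) h1
    rw [hx (n + 1 + k)] at h2
    exact hxA' (n + 1 + k) h2.2
  -- contradict DCC
  obtain ⟨M, hMmem, hMmin⟩ := hDCC (Set.range B)
    (by rintro _ ⟨n, rfl⟩; exact hBF n) ⟨B 0, 0, rfl⟩
  obtain ⟨n, rfl⟩ := hMmem
  have := hMmin (B (n + 1)) ⟨n + 1, rfl⟩ (hBsub n)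
  exact hxnB n (this ▸ hxB n)
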